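/- Let (S_n)_{n∈ℕ} be a sequence of measure expanding subsets of ℤ. Then there is a sequence of finite sets S'_n ⊆ S_n such that the union S' := ⋃_{n=1}^∞ S'_n is measure expanding. -/

import Mathlib

/-- A measure preserving system: a probability space `(X, μ)` together with an
invertible measure preserving transformation `T : X → X`. -/
structure MPSystem where
  X : Type
  [mX : MeasurableSpace X]
  μ : MeasureTheory.Measure X
  prob : MeasureTheory.IsProbabilityMeasure μ
  T : X ≃ᵐ X
  mp : MeasureTheory.MeasurePreserving T μ μ

attribute [instance] MPSystem.mX

open MeasureTheory Filter

namespace MPSystem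

/-- The `n`-th iterate `Tⁿ` of the transformation, for `n : ℤ`. -/
def iter (𝒮 : MPSystem) (n : ℤ) : 𝒮.X → 𝒮.X :=
  fun x => ((𝒮.T.toEquiv : Equiv.Perm 𝒮.X) ^ n) x

/-- The system is ergodic: every measurable `D` with `μ(D △ T⁻¹D) = 0` has measure `0` or `1`. -/
def IsErgodic (𝒮 : MPSystem) : Prop :=
  ∀ D : Set 𝒮.X, MeasurableSet D → 𝒮.μ (symmDiff D (𝒮.T ⁻¹' D)) = 0 →
    𝒮.μ D = 0 ∨ 𝒮.μ D = 1

/-- The product system `(X × X, μ × μ, T × T)`. -/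
noncomputable def prod (𝒮 : MPSystem) : MPSystem where
  X := 𝒮.X × 𝒮.X
  μ := 𝒮.μ.prod 𝒮.μ
  prob := by have := 𝒮.prob; infer_instance
  T := 𝒮.T.prodCongr 𝒮.T
  mp := by have := 𝒮.prob; exact 𝒮.mp.prod 𝒮.mp

/-- The system is weak mixing: the product system `(X×X, μ×μ, T×T)` is ergodic. -/
def WeakMixing (𝒮 : MPSystem) : Prop := 𝒮.prod.IsErgodic

/-- The system is nontrivial: some measurable `D` has `μ(D △ T⁻¹D) > 0`. -/
def Nontrivial (𝒮 : MPSystem) : Prop :=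
  ∃ D : Set 𝒮.X, MeasurableSet D ∧ 0 < 𝒮.μ (symmDiff D (𝒮.T ⁻¹' D))

end MPSystem

/-- `S ⊆ ℤ` is a set of recurrence: for every measure preserving system and every
measurable `D` with `μ(D) > 0`, there is `n ∈ S` with `μ(D ∩ TⁿD) > 0`. -/
def IsRecurrenceSet (S : Set ℤ) : Prop :=
  ∀ (𝒮 : MPSystem) (D : Set 𝒮.X), MeasurableSet D → 0 < 𝒮.μ D →
    ∃ n ∈ S, 0 < 𝒮.μ (D ∩ 𝒮.iter n '' D)

/-- `S ⊆ ℤ` is measure expanding: every translate `S + m` is a set of recurrence. -/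
def MeasureExpanding (S : Set ℤ) : Prop :=
  ∀ m : ℤ, IsRecurrenceSet ((fun s => s + m) '' S)

/-- `S` is a set of `δ`-recurrence: for every measure preserving system and every
measurable `D` with `μ(D) > δ`, there is `n ∈ S` with `μ(D ∩ TⁿD) > 0`. -/
def IsDeltaRecurrenceSet (δ : ℝ) (S : Set ℤ) : Prop :=
  ∀ (𝒮 : MPSystem) (D : Set 𝒮.X), MeasurableSet D → ENNReal.ofReal δ < 𝒮.μ D →
    ∃ n ∈ S, 0 < 𝒮.μ (D ∩ 𝒮.iter n '' D)

/-- `S` (an infinite set) is a set of rigidity for the system `𝒮`: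
for every measurable `D` and every `ε > 0`, `{n ∈ S : μ(D △ TⁿD) > ε}` is finite. -/
def IsRigiditySetFor (S : Set ℤ) (𝒮 : MPSystem) : Prop :=
  S.Infinite ∧ ∀ D : Set 𝒮.X, MeasurableSet D → ∀ ε : ℝ, 0 < ε →
    {n ∈ S | ENNReal.ofReal ε < 𝒮.μ (symmDiff D (𝒮.iter n '' D))}.Finite

/-- `S` is a set of strong recurrence. -/
def IsStrongRecurrenceSet (S : Set ℤ) : Prop :=
  ∀ (𝒮 : MPSystem) (D : Set 𝒮.X), MeasurableSet D → 0 < 𝒮.μ D →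
    ∃ c : ℝ, 0 < c ∧ {n ∈ S | ENNReal.ofReal c < 𝒮.μ (D ∩ 𝒮.iter n '' D)}.Infinite

/-- `S` is a set of strong recurrence for weak mixing systems. -/
def IsStrongRecurrenceSetForWeakMixing (S : Set ℤ) : Prop :=
  ∀ (𝒮 : MPSystem), 𝒮.WeakMixing → ∀ (D : Set 𝒮.X), MeasurableSet D → 0 < 𝒮.μ D →
    ∃ c : ℝ, 0 < c ∧ {n ∈ S | ENNReal.ofReal c < 𝒮.μ (D ∩ 𝒮.iter n '' D)}.Infinite

/-- The circle group `𝕋 = ℝ/ℤ`. -/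
abbrev 𝕋 : Type := UnitAddCircle

/-- The character `e : 𝕋 → S¹ ⊆ ℂ`, `e(x) = exp(2πi x̃)` where `x̃` is a real
representative of `x`. -/
noncomputable def e (x : 𝕋) : ℂ := (AddCircle.toCircle x : ℂ)

/-- A tuple `α ∈ 𝕋^d` is independent if the only integer solution of
`n₁α₁ + ⋯ + n_dα_d = 0` is `n₁ = ⋯ = n_d = 0`. -/
def IndepTuple {d : ℕ} (α : Fin d → 𝕋) : Prop :=
  ∀ n : Fin d → ℤ, (∑ j, n j • α j) = 0 → ∀ j, n j = 0

/-- The Bohr set `Bohr(α, η) = {n ∈ ℤ : max_j ‖nαⱼ‖ < η}`. -/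
def BohrSet {d : ℕ} (α : Fin d → 𝕋) (η : ℝ) : Set ℤ :=
  {n : ℤ | ∀ j, ‖n • α j‖ < η}

/-- The Bohr–Hamming neighborhood `BH(α; ε, η) = {n ∈ ℤ : #{j : ‖nαⱼ‖ < ε} ≥ (1-η)d}`. -/
def BHNbhd {d : ℕ} (α : Fin d → 𝕋) (ε η : ℝ) : Set ℤ :=
  {n : ℤ | (1 - η) * d ≤ ({j : Fin d | ‖n • α j‖ < ε}.ncard : ℝ)}

/-- The upper Banach density of `A ⊆ ℤ`:
`d*(A) = lim_k sup_n |A ∩ {n+1,…,n+k}|/k` (realized as a `limsup`). -/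
noncomputable def upperBanachDensity (A : Set ℤ) : ℝ :=
  Filter.limsup
    (fun k : ℕ => ⨆ n : ℤ, ((A ∩ Set.Icc (n + 1) (n + k)).ncard : ℝ) / k) Filter.atTop


/-! ### Auxiliary development for the proof -/

section AuxIter

open MeasureTheory Filter Set

namespace MPSystem

variable (𝒮 : MPSystem)

lemma iter_mp (n : ℤ) : MeasurePreserving (𝒮.iter n) 𝒮.μ 𝒮.μ := by
  induction n using Int.induction_on with
  | zero =>
      have : 𝒮.iter 0 = id := by funext x; simp [iter]
      rw [this]; exact MeasurePreserving.id 𝒮.μ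
  | succ k ih =>
      have : 𝒮.iter ((k : ℤ) + 1) = ⇑𝒮.T ∘ 𝒮.iter k := by
        funext x
        simp only [iter, Function.comp_apply]
        rw [show ((k : ℤ) + 1) = 1 + (k : ℤ) by ring, zpow_one_add]
        simp
      rw [this]; exact 𝒮.mp.comp ih
  | pred k ih =>
      have : 𝒮.iter (-(k : ℤ) - 1) = 𝒮.iter (-k) ∘ ⇑𝒮.T.symm := by
        funext x
        simp only [iter, Function.comp_apply]
        rw [zpow_sub_one]
        simp [Equiv.Perm.inv_def]
      rw [this]; exact ih.comp (MeasurePreserving.symm 𝒮.T 𝒮.mp)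

lemma iter_image (n : ℤ) (D : Set 𝒮.X) : 𝒮.iter n '' D = 𝒮.iter (-n) ⁻¹' D := by
  show ⇑((𝒮.T.toEquiv : Equiv.Perm 𝒮.X) ^ n) '' D = _
  rw [Equiv.image_eq_preimage_symm]
  have : ((𝒮.T.toEquiv : Equiv.Perm 𝒮.X) ^ n).symm
      = (𝒮.T.toEquiv : Equiv.Perm 𝒮.X) ^ (-n) := by
    rw [← Equiv.Perm.inv_def, ← zpow_neg]
  rw [this]; rfl

lemma iter_measurableSet (n : ℤ) {D : Set 𝒮.X} (hD : MeasurableSet D) :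
    MeasurableSet (𝒮.iter n '' D) := by
  rw [𝒮.iter_image n D]; exact (𝒮.iter_mp (-n)).measurable hD

lemma iter_T (n : ℤ) (x : 𝒮.X) : 𝒮.iter n (𝒮.T x) = 𝒮.iter (n + 1) x := by
  simp only [iter]
  rw [zpow_add_one]
  simp

lemma iter_zero_apply (x : 𝒮.X) : 𝒮.iter 0 x = x := by simp [iter]

end MPSystem

end AuxIter

section Shift

open MeasureTheory Filter Set Topology
open scoped ENNReal

/-- The full shift space on two symbols. -/
abbrev OmSp : Type := ℤ → Bool

/-- The shift transformation as a measurable equivalence. -/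
def shiftME : OmSp ≃ᵐ OmSp where
  toEquiv :=
    { toFun := fun ω n => ω (n + 1)
      invFun := fun ω n => ω (n - 1)
      left_inv := fun ω => by funext n; simp
      right_inv := fun ω => by funext n; simp }
  measurable_toFun := measurable_pi_lambda _ fun n => measurable_pi_apply (n + 1)
  measurable_invFun := measurable_pi_lambda _ fun n => measurable_pi_apply (n - 1)

lemma shiftME_apply (ω : OmSp) (n : ℤ) : shiftME ω n = ω (n + 1) := rfl

lemma continuous_shiftME : Continuous (⇑shiftME) :=
  continuous_pi fun n => continuous_apply (n + 1)

lemma shift_zpow (m : ℤ) : ∀ (ω : OmSp) (j : ℤ),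
    ((shiftME.toEquiv : Equiv.Perm OmSp) ^ m) ω j = ω (j + m) := by
  induction m using Int.induction_on with
  | zero => intro ω j; simp
  | succ k ih =>
      intro ω j
      rw [show ((k : ℤ) + 1) = 1 + (k : ℤ) by ring, zpow_one_add, Equiv.Perm.mul_apply]
      have h1 : (shiftME.toEquiv (((shiftME.toEquiv : Equiv.Perm OmSp) ^ (k : ℤ)) ω)) j
          = (((shiftME.toEquiv : Equiv.Perm OmSp) ^ (k : ℤ)) ω) (j + 1) := rfl
      rw [h1, ih]
      congr 1; ring
  | pred k ih =>
      intro ω j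
      rw [zpow_sub_one, Equiv.Perm.mul_apply]
      have h1 : ((shiftME.toEquiv : Equiv.Perm OmSp)⁻¹) ω = fun i => ω (i - 1) := rfl
      rw [h1, ih]
      congr 1; ring

/-- The cylinder set prescribing coordinate `i` to be `true`. -/
def cylSet (i : ℤ) : Set OmSp := {ω | ω i = true}

lemma isClopen_cylSet (i : ℤ) : IsClopen (cylSet i) :=
  (isClopen_discrete {true}).preimage (continuous_apply i)

lemma measurableSet_cylSet (i : ℤ) : MeasurableSet (cylSet i) := by
  have h : cylSet i = (fun ω : OmSp => ω i) ⁻¹' {true} := rfl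
  rw [h]
  exact measurable_pi_apply i MeasurableSpace.measurableSet_top

/-- The collection of clopen measurable subsets of the shift space. -/
def ClopSets : Set (Set OmSp) := {A | IsClopen A ∧ MeasurableSet A}

lemma isPiSystem_ClopSets : IsPiSystem ClopSets := fun A hA B hB _ =>
  ⟨hA.1.inter hB.1, hA.2.inter hB.2⟩

lemma pi_eq_generateFrom_ClopSets :
    (inferInstance : MeasurableSpace OmSp) = .generateFrom ClopSets := by
  apply le_antisymm
  · show MeasurableSpace.pi ≤ _
    refine iSup_le fun i => ?_
    intro t ht
    obtain ⟨s, -, rfl⟩ := ht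
    exact MeasurableSpace.measurableSet_generateFrom
      ⟨(isClopen_discrete s).preimage (continuous_apply i),
        measurable_pi_apply i MeasurableSpace.measurableSet_top⟩
  · exact MeasurableSpace.generateFrom_le fun A hA => hA.2

end Shift

section LimitMeasure

open MeasureTheory Filter Set Topology
open scoped ENNReal

variable (ν : ℕ → MeasureTheory.Measure OmSp) (𝒰 : Ultrafilter ℕ)

/-- The ultrafilter limit of the measures of a set. -/
noncomputable def ulim (A : Set OmSp) : ℝ≥0∞ := (𝒰.map fun k => ν k A).lim

lemma tendsto_ulim (A : Set OmSp) :
    Filter.Tendsto (fun k => ν k A) 𝒰 (nhds (ulim ν 𝒰 A)) := by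
  have := Ultrafilter.le_nhds_lim (𝒰.map fun k => ν k A)
  rwa [Ultrafilter.coe_map] at this

lemma ulim_eq {A : Set OmSp} {x : ℝ≥0∞}
    (h : Filter.Tendsto (fun k => ν k A) 𝒰 (nhds x)) : ulim ν 𝒰 A = x :=
  tendsto_nhds_unique (tendsto_ulim ν 𝒰 A) h

lemma ulim_empty : ulim ν 𝒰 ∅ = 0 :=
  ulim_eq ν 𝒰 (by simpa using tendsto_const_nhds)

lemma ulim_univ (hprob : ∀ k, MeasureTheory.IsProbabilityMeasure (ν k)) :
    ulim ν 𝒰 univ = 1 :=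
  ulim_eq ν 𝒰 (by simp only [fun k => (hprob k).measure_univ]; exact tendsto_const_nhds)

lemma ulim_inter_add_diff (A : Set OmSp) {E : Set OmSp} (hE : MeasurableSet E) :
    ulim ν 𝒰 (A ∩ E) + ulim ν 𝒰 (A \ E) = ulim ν 𝒰 A := by
  refine (ulim_eq ν 𝒰 ?_).symm
  have h : (fun k => ν k A) = fun k => ν k (A ∩ E) + ν k (A \ E) := by
    funext k; exact (measure_inter_add_diff A hE).symm
  rw [h]
  exact ((tendsto_ulim ν 𝒰 (A ∩ E)).add (tendsto_ulim ν 𝒰 (A \ E)))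

open Classical in
/-- The set function feeding the Carathéodory construction. -/
noncomputable def mfn (A : Set OmSp) : ℝ≥0∞ :=
  if A ∈ ClopSets then ulim ν 𝒰 A else ⊤

open Classical in
lemma mfn_of_mem {A : Set OmSp} (h : A ∈ ClopSets) : mfn ν 𝒰 A = ulim ν 𝒰 A := if_pos h

open Classical in
lemma mfn_of_not_mem {A : Set OmSp} (h : A ∉ ClopSets) : mfn ν 𝒰 A = ⊤ := if_neg h

lemma mfn_empty : mfn ν 𝒰 ∅ = 0 := by
  rw [mfn_of_mem ν 𝒰 ⟨isClopen_empty, MeasurableSet.empty⟩, ulim_empty]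

/-- The outer measure obtained from the ultrafilter limit on clopen sets. -/
noncomputable def limOM : MeasureTheory.OuterMeasure OmSp :=
  MeasureTheory.OuterMeasure.ofFunction (mfn ν 𝒰) (mfn_empty ν 𝒰)

lemma limOM_clop {A : Set OmSp} (hA : A ∈ ClopSets) : limOM ν 𝒰 A = ulim ν 𝒰 A := by
  refine le_antisymm ((MeasureTheory.OuterMeasure.ofFunction_le _).trans ?_) ?_
  · rw [mfn_of_mem ν 𝒰 hA]
  · rw [limOM, MeasureTheory.OuterMeasure.ofFunction_eq_iInf_mem (mfn ν 𝒰) (mfn_empty ν 𝒰)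
      (P := fun s => s ∈ ClopSets) (fun s hs => mfn_of_not_mem ν 𝒰 hs) A]
    refine le_iInf fun t => le_iInf fun ht => le_iInf fun hcover => ?_
    obtain ⟨u, hu⟩ := (hA.1.isClosed.isCompact).elim_finite_subcover t
      (fun i => (ht i).1.isOpen) hcover
    have hle : ulim ν 𝒰 A ≤ ∑ i ∈ u, ulim ν 𝒰 (t i) := by
      refine le_of_tendsto_of_tendsto' (tendsto_ulim ν 𝒰 A)
        (tendsto_finset_sum u fun i _ => tendsto_ulim ν 𝒰 (t i)) (fun k => ?_)
      exact (measure_mono hu).trans (measure_biUnion_finset_le u t)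
    refine hle.trans ?_
    have : ∑ i ∈ u, ulim ν 𝒰 (t i) = ∑ i ∈ u, mfn ν 𝒰 (t i) := by
      refine Finset.sum_congr rfl fun i _ => ?_
      rw [mfn_of_mem ν 𝒰 (ht i)]
    rw [this]
    exact ENNReal.sum_le_tsum u

lemma clop_caratheodory {E : Set OmSp} (hE : E ∈ ClopSets) :
    MeasurableSet[(limOM ν 𝒰).caratheodory] E := by
  refine MeasureTheory.OuterMeasure.ofFunction_caratheodory fun A => ?_
  by_cases hA : A ∈ ClopSets
  · have h1 : A ∩ E ∈ ClopSets := ⟨hA.1.inter hE.1, hA.2.inter hE.2⟩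
    have h2 : A \ E ∈ ClopSets := by
      rw [Set.diff_eq]
      exact ⟨hA.1.inter hE.1.compl, hA.2.inter hE.2.compl⟩
    rw [mfn_of_mem ν 𝒰 hA, mfn_of_mem ν 𝒰 h1, mfn_of_mem ν 𝒰 h2]
    exact le_of_eq (ulim_inter_add_diff ν 𝒰 A hE.2)
  · rw [mfn_of_not_mem ν 𝒰 hA]
    exact le_top

lemma pi_le_caratheodory :
    (inferInstance : MeasurableSpace OmSp) ≤ (limOM ν 𝒰).caratheodory := by
  rw [pi_eq_generateFrom_ClopSets]
  exact MeasurableSpace.generateFrom_le fun A hA => clop_caratheodory ν 𝒰 hA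

/-- The limit measure. -/
noncomputable def νlim : MeasureTheory.Measure OmSp :=
  (limOM ν 𝒰).toMeasure (pi_le_caratheodory ν 𝒰)

lemma νlim_clop {A : Set OmSp} (hA : A ∈ ClopSets) : νlim ν 𝒰 A = ulim ν 𝒰 A := by
  rw [νlim, MeasureTheory.toMeasure_apply _ _ hA.2, limOM_clop ν 𝒰 hA]

lemma νlim_prob (hprob : ∀ k, MeasureTheory.IsProbabilityMeasure (ν k)) :
    MeasureTheory.IsProbabilityMeasure (νlim ν 𝒰) := by
  constructor
  rw [νlim_clop ν 𝒰 ⟨isClopen_univ, MeasurableSet.univ⟩, ulim_univ ν 𝒰 hprob]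

lemma νlim_invariant (hprob : ∀ k, MeasureTheory.IsProbabilityMeasure (ν k))
    (hinv : ∀ k, (ν k).map (⇑shiftME) = ν k) :
    (νlim ν 𝒰).map (⇑shiftME) = νlim ν 𝒰 := by
  haveI := νlim_prob ν 𝒰 hprob
  haveI : MeasureTheory.IsProbabilityMeasure ((νlim ν 𝒰).map (⇑shiftME)) :=
    MeasureTheory.Measure.isProbabilityMeasure_map shiftME.measurable.aemeasurable
  refine MeasureTheory.ext_of_generate_finite ClopSets pi_eq_generateFrom_ClopSets
    isPiSystem_ClopSets (fun s hs => ?_) (by simp [measure_univ])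
  rw [MeasureTheory.Measure.map_apply shiftME.measurable hs.2]
  have hpre : (⇑shiftME) ⁻¹' s ∈ ClopSets :=
    ⟨hs.1.preimage continuous_shiftME, shiftME.measurable hs.2⟩
  rw [νlim_clop ν 𝒰 hpre, νlim_clop ν 𝒰 hs]
  have h : (fun k => ν k ((⇑shiftME) ⁻¹' s)) = fun k => ν k s := by
    funext k
    conv_rhs => rw [← hinv k]
    rw [MeasureTheory.Measure.map_apply shiftME.measurable hs.2]
  rw [ulim, h]; rfl

end LimitMeasure

section Finitization

open MeasureTheory Filter Set Topology
open scoped ENNReal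

lemma measurable_boolIndicator' {X : Type} [MeasurableSpace X] {D : Set X}
    (hD : MeasurableSet D) : Measurable (D.boolIndicator) := by
  refine measurable_to_countable' fun b => ?_
  cases b
  · rw [Set.preimage_boolIndicator_false]; exact hD.compl
  · rw [Set.preimage_boolIndicator_true]; exact hD

/-- Finitization: every set of recurrence contains, for each `δ > 0`, a finite subset that is a
set of `δ`-recurrence. -/
lemma exists_finite_deltaRecurrence {R : Set ℤ} (hR : IsRecurrenceSet R) {δ : ℝ} (hδ : 0 < δ) :
    ∃ F : Set ℤ, F ⊆ R ∧ F.Finite ∧ IsDeltaRecurrenceSet δ F := by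
  by_contra hcon
  push_neg at hcon
  have key : ∀ k : ℕ, ∃ (𝒮 : MPSystem) (D : Set 𝒮.X), MeasurableSet D ∧
      ENNReal.ofReal δ < 𝒮.μ D ∧
      ∀ n ∈ R ∩ Set.Icc (-(k : ℤ)) (k : ℤ), 𝒮.μ (D ∩ 𝒮.iter n '' D) = 0 := by
    intro k
    have hfin : (R ∩ Set.Icc (-(k : ℤ)) (k : ℤ)).Finite :=
      (Set.finite_Icc _ _).inter_of_right _
    have h2 := hcon (R ∩ Set.Icc (-(k : ℤ)) (k : ℤ)) Set.inter_subset_left hfin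
    rw [IsDeltaRecurrenceSet] at h2
    push_neg at h2
    obtain ⟨𝒮, D, h1, h2, h3⟩ := h2
    exact ⟨𝒮, D, h1, h2, fun n hn => le_antisymm (h3 n hn) zero_le⟩
  choose 𝒮k Dk hmeas hbig hzero using key
  -- the factor maps to the shift space
  let φ : ∀ k : ℕ, (𝒮k k).X → OmSp := fun k x n => (Dk k).boolIndicator ((𝒮k k).iter n x)
  have hφmeas : ∀ k, Measurable (φ k) := fun k =>
    measurable_pi_lambda _ fun n =>
      (measurable_boolIndicator' (hmeas k)).comp ((𝒮k k).iter_mp n).measurable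
  let ν : ℕ → Measure OmSp := fun k => ((𝒮k k).μ).map (φ k)
  have hprob : ∀ k, IsProbabilityMeasure (ν k) := fun k => by
    haveI := (𝒮k k).prob
    exact Measure.isProbabilityMeasure_map (hφmeas k).aemeasurable
  -- equivariance and invariance
  have hequiv : ∀ k, (⇑shiftME) ∘ (φ k) = (φ k) ∘ (⇑(𝒮k k).T) := by
    intro k; funext x; funext n
    show φ k x (n + 1) = φ k ((𝒮k k).T x) n
    simp only [φ, (𝒮k k).iter_T n x]
  have hinv : ∀ k, (ν k).map (⇑shiftME) = ν k := by
    intro k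
    rw [Measure.map_map shiftME.measurable (hφmeas k), hequiv k,
      ← Measure.map_map (hφmeas k) (𝒮k k).T.measurable, (𝒮k k).mp.map_eq]
  -- preimages of cylinder sets
  have hpre0 : ∀ k, (φ k) ⁻¹' (cylSet 0) = Dk k := by
    intro k
    ext x
    show (Dk k).boolIndicator ((𝒮k k).iter 0 x) = true ↔ x ∈ Dk k
    rw [(𝒮k k).iter_zero_apply x, ← Set.mem_iff_boolIndicator]
  have hpre : ∀ (k : ℕ) (n : ℤ),
      (φ k) ⁻¹' (cylSet 0 ∩ cylSet (-n)) = Dk k ∩ (𝒮k k).iter n '' Dk k := by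
    intro k n
    rw [Set.preimage_inter, hpre0 k, (𝒮k k).iter_image n]
    congr 1
    ext x
    show (Dk k).boolIndicator ((𝒮k k).iter (-n) x) = true ↔ (𝒮k k).iter (-n) x ∈ Dk k
    rw [← Set.mem_iff_boolIndicator]
  -- the ultrafilter and the limit system
  obtain ⟨𝒰, h𝒰⟩ := Ultrafilter.exists_le (Filter.atTop : Filter ℕ)
  haveI : IsProbabilityMeasure (νlim ν 𝒰) := νlim_prob ν 𝒰 hprob
  let Ξ : MPSystem :=
    { X := OmSp
      μ := νlim ν 𝒰
      prob := νlim_prob ν 𝒰 hprob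
      T := shiftME
      mp := ⟨shiftME.measurable, νlim_invariant ν 𝒰 hprob hinv⟩ }
  -- positive measure of the base cylinder
  have hν0 : ∀ k, ν k (cylSet 0) = (𝒮k k).μ (Dk k) := by
    intro k
    rw [Measure.map_apply (hφmeas k) (measurableSet_cylSet 0), hpre0 k]
  have hDpos : 0 < Ξ.μ (cylSet 0) := by
    have h1 : Ξ.μ (cylSet 0) = ulim ν 𝒰 (cylSet 0) :=
      νlim_clop ν 𝒰 ⟨isClopen_cylSet 0, measurableSet_cylSet 0⟩
    have h2 : ENNReal.ofReal δ ≤ ulim ν 𝒰 (cylSet 0) := by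
      refine ge_of_tendsto' (tendsto_ulim ν 𝒰 (cylSet 0)) fun k => ?_
      rw [hν0 k]
      exact (hbig k).le
    rw [h1]
    exact lt_of_lt_of_le (ENNReal.ofReal_pos.mpr hδ) h2
  -- apply recurrence of R to the limit system
  obtain ⟨n, hnR, hnpos⟩ := hR Ξ (cylSet 0) (measurableSet_cylSet 0) hDpos
  -- identify the recurrence set as a cylinder set
  have himage : Ξ.iter n '' (cylSet 0) = cylSet (-n) := by
    rw [Ξ.iter_image n]
    ext ω
    show Ξ.iter (-n) ω 0 = true ↔ ω (-n) = true
    have : Ξ.iter (-n) ω 0 = ω (0 + -n) := shift_zpow (-n) ω 0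
    rw [this, zero_add]
  rw [himage] at hnpos
  -- but this cylinder has limit measure zero
  have hzero' : Ξ.μ (cylSet 0 ∩ cylSet (-n)) = 0 := by
    have hclop : cylSet 0 ∩ cylSet (-n) ∈ ClopSets :=
      ⟨(isClopen_cylSet 0).inter (isClopen_cylSet (-n)),
        (measurableSet_cylSet 0).inter (measurableSet_cylSet (-n))⟩
    have h1 : Ξ.μ (cylSet 0 ∩ cylSet (-n)) = ulim ν 𝒰 (cylSet 0 ∩ cylSet (-n)) :=
      νlim_clop ν 𝒰 hclop
    rw [h1]
    refine ulim_eq ν 𝒰 ?_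
    have hev : (fun k => ν k (cylSet 0 ∩ cylSet (-n))) =ᶠ[↑𝒰] (fun _ => (0 : ℝ≥0∞)) := by
      refine Filter.Eventually.filter_mono h𝒰 ?_
      filter_upwards [Filter.eventually_ge_atTop n.natAbs] with k hk
      rw [Measure.map_apply (hφmeas k)
        ((measurableSet_cylSet 0).inter (measurableSet_cylSet (-n))), hpre k n]
      refine hzero k n ⟨hnR, ?_⟩
      rw [Set.mem_Icc]
      omega
    rw [Filter.tendsto_congr' hev]
    exact tendsto_const_nhds
  rw [hzero'] at hnpos
  exact lt_irrefl 0 hnpos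

end Finitization

/-- **Lemma.** Given a sequence of measure expanding sets `Sₙ ⊆ ℤ`, there are finite sets
`S'ₙ ⊆ Sₙ` whose union is measure expanding. -/
theorem exists_finite_selection_measureExpanding
    (Sseq : ℕ → Set ℤ) (h : ∀ n, MeasureExpanding (Sseq n)) :
    ∃ S' : ℕ → Set ℤ, (∀ n, S' n ⊆ Sseq n ∧ (S' n).Finite) ∧
      MeasureExpanding (⋃ n, S' n) := by
  classical
  -- a pairing of `ℕ` with `ℤ × ℕ`
  let e : ℤ × ℕ ≃ ℕ := Denumerable.eqv (ℤ × ℕ)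
  let p : ℕ → ℤ × ℕ := fun k => e.symm k
  have hsel : ∀ k : ℕ, ∃ F : Set ℤ, F ⊆ (fun s => s + (p k).1) '' Sseq k ∧ F.Finite ∧
      IsDeltaRecurrenceSet (1 / (((p k).2 : ℝ) + 1)) F := by
    intro k
    exact exists_finite_deltaRecurrence (h k (p k).1) (by positivity)
  choose F hF1 hF2 hF3 using hsel
  refine ⟨fun k => (fun s => s + -(p k).1) '' F k, fun k => ⟨?_, (hF2 k).image _⟩, ?_⟩
  · -- the selected finite set is a subset of `Sseq k`
    rintro - ⟨a, haF, rfl⟩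
    obtain ⟨s, hs, rfl⟩ := hF1 k haF
    simpa using hs
  · -- the union is measure expanding
    intro m 𝒮 D hD hpos
    obtain ⟨j, hj⟩ : ∃ j : ℕ, ENNReal.ofReal (1 / ((j : ℝ) + 1)) < 𝒮.μ D := by
      have htend : Filter.Tendsto (fun j : ℕ => ENNReal.ofReal (1 / ((j : ℝ) + 1)))
          Filter.atTop (nhds 0) := by
        rw [show (0 : ENNReal) = ENNReal.ofReal 0 by simp]
        exact (ENNReal.continuous_ofReal.tendsto 0).comp
          tendsto_one_div_add_atTop_nhds_zero_nat
      exact (htend.eventually_lt_const hpos).exists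
    set k := e (m, j) with hk
    have hpk : p k = (m, j) := by simp [p, hk]
    have hrec := hF3 k
    rw [hpk] at hrec
    obtain ⟨n, hnF, hn⟩ := hrec 𝒮 D hD hj
    refine ⟨n, ?_, hn⟩
    refine ⟨n + -m, ?_, by ring⟩
    refine Set.mem_iUnion.mpr ⟨k, ?_⟩
    refine ⟨n, ?_, by rw [hpk]⟩
    exact hnF
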